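/- Fix an integer K ≥ 2, a real α > 1/2, and an integer T ≥ 1. Then the probability that for some pair i < j the empirical means ever leave the confidence intervals — precisely, the probability of the event that there exist indices 1 ≤ i < j ≤ K and an integer n ≥ 1 such that either (n ≤ T and |μ^{ij}_n − p_{ij}| > √(α·ln T / n)) or (n > T and |μ^{ij}_n − p_{ij}| > √(α·ln n / n)) — is at most (4α−1)·K² / ((2α−1)·T^{2α−1}). (This is the probabilistic content of Lemma 1 of the paper, which asserts that all pairwise confidence intervals of a K-armed dueling bandit algorithm are simultaneously correct from time T onward with the stated failure probability.) -/

import Mathlib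

open MeasureTheory ProbabilityTheory Real

section AuxLemmas

lemma hoeff_scalar {p : ℝ} (hp0 : 0 ≤ p) (hp1 : p ≤ 1) (t : ℝ) :
    (1 - p) * Real.exp (t * (0 - p)) + p * Real.exp (t * (1 - p)) ≤ Real.exp (t ^ 2 / 8) := by
  have hDpos : ∀ x : ℝ, 0 < 1 - p + p * exp x := by
    intro x
    rcases le_or_gt (exp x) 1 with h | h
    · nlinarith [exp_pos x]
    · nlinarith
  set f : ℝ → ℝ := fun x => x ^ 2 / 8 - Real.log (1 - p + p * exp x) + x * p with hfdef
  set f' : ℝ → ℝ := fun x => x / 4 - p * exp x / (1 - p + p * exp x) + p with hf'def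
  have hD : ∀ x : ℝ, HasDerivAt (fun y => 1 - p + p * exp y) (p * exp x) x := by
    intro x
    simpa using ((Real.hasDerivAt_exp x).const_mul p).const_add (1 - p)
  have hf : ∀ x, HasDerivAt f (f' x) x := by
    intro x
    have h1 : HasDerivAt (fun y : ℝ => y ^ 2 / 8) (x / 4) x := by
      have := (hasDerivAt_pow 2 x).div_const 8
      refine this.congr_deriv ?_
      ring
    have h2 : HasDerivAt (fun y => Real.log (1 - p + p * exp y))
        (p * exp x / (1 - p + p * exp x)) x := (hD x).log (hDpos x).ne'
    have h3 : HasDerivAt (fun y : ℝ => y * p) p x := by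
      simpa using (hasDerivAt_id x).mul_const p
    exact (h1.sub h2).add h3
  have hf'' : ∀ x, HasDerivAt f'
      (1 / 4 - (p * exp x * (1 - p + p * exp x) - p * exp x * (p * exp x)) /
        (1 - p + p * exp x) ^ 2) x := by
    intro x
    have h1 : HasDerivAt (fun y : ℝ => y / 4) (1 / 4) x := (hasDerivAt_id x).div_const 4
    have h2 : HasDerivAt (fun y => p * exp y / (1 - p + p * exp y))
        ((p * exp x * (1 - p + p * exp x) - p * exp x * (p * exp x)) /
          (1 - p + p * exp x) ^ 2) x :=
      ((Real.hasDerivAt_exp x).const_mul p).div (hD x) (hDpos x).ne'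
    exact (h1.sub h2).add_const p
  have hf''nonneg : ∀ x, 0 ≤ 1 / 4 - (p * exp x * (1 - p + p * exp x) -
      p * exp x * (p * exp x)) / (1 - p + p * exp x) ^ 2 := by
    intro x
    have hD2 : (0:ℝ) < (1 - p + p * exp x) ^ 2 := pow_pos (hDpos x) 2
    rw [sub_nonneg, div_le_iff₀ hD2]
    nlinarith [sq_nonneg (1 - p - p * exp x), exp_pos x]
  have hmono' : Monotone f' :=
    monotone_of_deriv_nonneg (fun x => (hf'' x).differentiableAt)
      (fun x => by rw [(hf'' x).deriv]; exact hf''nonneg x)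
  have hf'0 : f' 0 = 0 := by
    simp [hf'def]
  have hf0 : f 0 = 0 := by
    simp [hfdef]
  have hfnonneg : ∀ x, 0 ≤ f x := by
    intro x
    rcases le_total 0 x with hx | hx
    · have hmf : MonotoneOn f (Set.Ici (0:ℝ)) := by
        refine monotoneOn_of_deriv_nonneg (convex_Ici 0)
          (fun y _ => ((hf y).differentiableAt).continuousAt.continuousWithinAt)
          (fun y _ => ((hf y).differentiableAt).differentiableWithinAt) ?_
        intro y hy
        rw [(hf y).deriv]
        have : (0:ℝ) ≤ y := le_of_lt (by simpa using hy)
        calc (0:ℝ) = f' 0 := hf'0.symm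
          _ ≤ f' y := hmono' this
      have := hmf (Set.self_mem_Ici) (Set.mem_Ici.2 hx) hx
      linarith [hf0 ▸ this]
    · have hmf : AntitoneOn f (Set.Iic (0:ℝ)) := by
        refine antitoneOn_of_deriv_nonpos (convex_Iic 0)
          (fun y _ => ((hf y).differentiableAt).continuousAt.continuousWithinAt)
          (fun y _ => ((hf y).differentiableAt).differentiableWithinAt) ?_
        intro y hy
        rw [(hf y).deriv]
        have hy0 : y ≤ (0:ℝ) := le_of_lt (by simpa using hy)
        calc f' y ≤ f' 0 := hmono' hy0
          _ = 0 := hf'0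
      have := hmf (Set.mem_Iic.2 hx) (Set.self_mem_Iic) hx
      linarith [hf0 ▸ this]
  -- conclude
  have hlog : Real.log (1 - p + p * exp t) ≤ t ^ 2 / 8 + t * p := by
    have := hfnonneg t
    simp only [hfdef] at this
    linarith
  have hDle : 1 - p + p * exp t ≤ Real.exp (t ^ 2 / 8 + t * p) :=
    (Real.log_le_iff_le_exp (hDpos t)).1 hlog
  have heq : (1 - p) * Real.exp (t * (0 - p)) + p * Real.exp (t * (1 - p))
      = Real.exp (-(t * p)) * (1 - p + p * exp t) := by
    rw [show t * (0 - p) = -(t * p) by ring, show t * (1 - p) = t + -(t * p) by ring,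
      Real.exp_add]
    ring
  rw [heq]
  calc Real.exp (-(t * p)) * (1 - p + p * exp t)
      ≤ Real.exp (-(t * p)) * Real.exp (t ^ 2 / 8 + t * p) := by
        exact mul_le_mul_of_nonneg_left hDle (exp_nonneg _)
    _ = Real.exp (t ^ 2 / 8) := by rw [← Real.exp_add]; ring_nf

variable {Ω : Type*} [MeasurableSpace Ω] {μ : Measure Ω}

lemma exp_mul_integrable [IsProbabilityMeasure μ] {Y : Ω → ℝ} (hY : Measurable Y)
    (hb : ∀ ω, Y ω ∈ Set.Icc (0:ℝ) 1) {p : ℝ} (hp0 : 0 ≤ p) (hp1 : p ≤ 1) (t : ℝ) :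
    Integrable (fun ω => exp (t * (Y ω - p))) μ := by
  refine Integrable.mono' (integrable_const (exp |t|))
    (((hY.sub_const p).const_mul t).exp.aestronglyMeasurable) (ae_of_all _ fun ω => ?_)
  rw [Real.norm_eq_abs, abs_of_pos (exp_pos _), exp_le_exp]
  have h1 := (hb ω).1; have h2 := (hb ω).2
  calc t * (Y ω - p) ≤ |t * (Y ω - p)| := le_abs_self _
    _ = |t| * |Y ω - p| := abs_mul _ _
    _ ≤ |t| * 1 := by
        refine mul_le_mul_of_nonneg_left ?_ (abs_nonneg t)
        rw [abs_le]; constructor <;> linarith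
    _ = |t| := mul_one _

lemma mgf_le_hoeff [IsProbabilityMeasure μ] {Y : Ω → ℝ} (hY : Measurable Y)
    (hb : ∀ ω, Y ω ∈ Set.Icc (0:ℝ) 1) {p : ℝ} (hp0 : 0 ≤ p) (hp1 : p ≤ 1)
    (hmean : ∫ ω, Y ω ∂μ = p) (t : ℝ) :
    mgf (fun ω => Y ω - p) μ t ≤ exp (t ^ 2 / 8) := by
  have hintY : Integrable Y μ := by
    refine Integrable.mono' (integrable_const 1) hY.aestronglyMeasurable
      (ae_of_all _ fun ω => ?_)
    rw [Real.norm_eq_abs, abs_le]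
    exact ⟨by linarith [(hb ω).1], (hb ω).2⟩
  have key : ∀ ω, exp (t * (Y ω - p)) ≤
      (1 - Y ω) * exp (t * (0 - p)) + Y ω * exp (t * (1 - p)) := by
    intro ω
    have h := convexOn_exp.2 (Set.mem_univ (t * (0 - p))) (Set.mem_univ (t * (1 - p)))
      (by linarith [(hb ω).2] : (0:ℝ) ≤ 1 - Y ω) ((hb ω).1) (by ring)
    rw [smul_eq_mul, smul_eq_mul] at h
    have harg : (1 - Y ω) * (t * (0 - p)) + Y ω * (t * (1 - p)) = t * (Y ω - p) := by ring
    rwa [harg] at h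
  have hint_rhs : Integrable
      (fun ω => (1 - Y ω) * exp (t * (0 - p)) + Y ω * exp (t * (1 - p))) μ := by
    exact (((integrable_const 1).sub hintY).mul_const _).add (hintY.mul_const _)
  have hmgf : mgf (fun ω => Y ω - p) μ t
      = ∫ ω, exp (t * (Y ω - p)) ∂μ := rfl
  rw [hmgf]
  calc ∫ ω, exp (t * (Y ω - p)) ∂μ
      ≤ ∫ ω, ((1 - Y ω) * exp (t * (0 - p)) + Y ω * exp (t * (1 - p))) ∂μ :=
        integral_mono (exp_mul_integrable hY hb hp0 hp1 t) hint_rhs key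
    _ = (1 - p) * exp (t * (0 - p)) + p * exp (t * (1 - p)) := by
        have e1 : Integrable (fun ω => (1 - Y ω) * exp (t * (0 - p))) μ :=
          ((integrable_const 1).sub hintY).mul_const _
        have e2 : Integrable (fun ω => Y ω * exp (t * (1 - p))) μ := hintY.mul_const _
        have e3 : (∫ ω, (1 - Y ω) ∂μ) = 1 - p := by
          rw [integral_sub (integrable_const 1) hintY, integral_const, hmean]
          simp
        rw [integral_add e1 e2, integral_mul_const, integral_mul_const, e3, hmean]
    _ ≤ exp (t ^ 2 / 8) := hoeff_scalar hp0 hp1 t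

lemma tail_bound [IsProbabilityMeasure μ] {Y : ℕ → Ω → ℝ} (hYmeas : ∀ k, Measurable (Y k))
    (hb : ∀ k ω, Y k ω ∈ Set.Icc (0:ℝ) 1)
    (hind : iIndepFun Y μ)
    {p : ℝ} (hp0 : 0 ≤ p) (hp1 : p ≤ 1) (hmean : ∀ k, ∫ ω, Y k ω ∂μ = p)
    {n : ℕ} (hn : 1 ≤ n) {ε : ℝ} (hε : 0 < ε) :
    μ {ω | |(∑ k ∈ Finset.range n, Y k ω) / n - p| > ε}
      ≤ ENNReal.ofReal (2 * exp (-2 * n * ε ^ 2)) := by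
  set Z : ℕ → Ω → ℝ := fun k ω => Y k ω - p with hZdef
  have hZmeas : ∀ k, Measurable (Z k) := fun k => (hYmeas k).sub_const p
  have hZind : iIndepFun Z μ :=
    hind.comp (fun _ x => x - p) (fun _ => measurable_id.sub_const p)
  have hZint : ∀ (t : ℝ) (k : ℕ), Integrable (fun ω => exp (t * Z k ω)) μ :=
    fun t k => exp_mul_integrable (hYmeas k) (hb k) hp0 hp1 t
  set F : Ω → ℝ := ∑ k ∈ Finset.range n, Z k with hFdef
  have hFint : ∀ t : ℝ, Integrable (fun ω => exp (t * F ω)) μ := fun t =>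
    hZind.integrable_exp_mul_sum hZmeas (fun k _ => hZint t k)
  have hmgf : ∀ t : ℝ, mgf F μ t ≤ exp (n * (t ^ 2 / 8)) := by
    intro t
    rw [hFdef, hZind.mgf_sum hZmeas]
    calc ∏ k ∈ Finset.range n, mgf (Z k) μ t
        ≤ ∏ _k ∈ Finset.range n, exp (t ^ 2 / 8) := by
          refine Finset.prod_le_prod (fun k _ => mgf_nonneg) (fun k _ => ?_)
          exact mgf_le_hoeff (hYmeas k) (hb k) hp0 hp1 (hmean k) t
      _ = exp (t ^ 2 / 8) ^ n := by rw [Finset.prod_const, Finset.card_range]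
      _ = exp (n * (t ^ 2 / 8)) := by rw [← Real.exp_nat_mul]
  have hnpos : (0:ℝ) < n := by exact_mod_cast hn
  -- upper tail
  have hup : (μ {ω | (n:ℝ) * ε ≤ F ω}).toReal ≤ exp (-2 * n * ε ^ 2) := by
    have h := measure_ge_le_exp_mul_mgf (μ := μ) (X := F) ((n:ℝ) * ε)
      (by positivity : (0:ℝ) ≤ 4 * ε) (hFint (4 * ε))
    refine h.trans ?_
    calc exp (-(4 * ε) * ((n:ℝ) * ε)) * mgf F μ (4 * ε)
        ≤ exp (-(4 * ε) * ((n:ℝ) * ε)) * exp (n * ((4 * ε) ^ 2 / 8)) :=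
          mul_le_mul_of_nonneg_left (hmgf (4 * ε)) (exp_nonneg _)
      _ = exp (-2 * n * ε ^ 2) := by rw [← Real.exp_add]; congr 1; ring
  have hlo : (μ {ω | F ω ≤ -((n:ℝ) * ε)}).toReal ≤ exp (-2 * n * ε ^ 2) := by
    have h := measure_le_le_exp_mul_mgf (μ := μ) (X := F) (-((n:ℝ) * ε))
      (by linarith : -(4 * ε) ≤ 0) (hFint (-(4 * ε)))
    refine h.trans ?_
    calc exp (-(-(4 * ε)) * -((n:ℝ) * ε)) * mgf F μ (-(4 * ε))
        ≤ exp (-(-(4 * ε)) * -((n:ℝ) * ε)) * exp (n * ((-(4 * ε)) ^ 2 / 8)) :=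
          mul_le_mul_of_nonneg_left (hmgf (-(4 * ε))) (exp_nonneg _)
      _ = exp (-2 * n * ε ^ 2) := by rw [← Real.exp_add]; congr 1; ring
  have hsub : {ω | |(∑ k ∈ Finset.range n, Y k ω) / n - p| > ε}
      ⊆ {ω | (n:ℝ) * ε ≤ F ω} ∪ {ω | F ω ≤ -((n:ℝ) * ε)} := by
    intro ω hω
    simp only [Set.mem_setOf_eq, gt_iff_lt] at hω
    have hFω : F ω = (∑ k ∈ Finset.range n, Y k ω) - n * p := by
      rw [hFdef]
      simp only [Finset.sum_apply, hZdef, Finset.sum_sub_distrib, Finset.sum_const,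
        Finset.card_range, nsmul_eq_mul]
    have hdiv : (∑ k ∈ Finset.range n, Y k ω) / n - p = F ω / n := by
      rw [hFω]; field_simp
    rw [hdiv, abs_div, abs_of_pos hnpos, lt_div_iff₀ hnpos] at hω
    rcases lt_abs.1 (by linarith : (n:ℝ) * ε < |F ω|) with h | h
    · exact Or.inl (Set.mem_setOf_eq ▸ h.le)
    · exact Or.inr (Set.mem_setOf_eq ▸ (by linarith : F ω ≤ -((n:ℝ) * ε)))
  calc μ {ω | |(∑ k ∈ Finset.range n, Y k ω) / n - p| > ε}
      ≤ μ ({ω | (n:ℝ) * ε ≤ F ω} ∪ {ω | F ω ≤ -((n:ℝ) * ε)}) := measure_mono hsub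
    _ ≤ μ {ω | (n:ℝ) * ε ≤ F ω} + μ {ω | F ω ≤ -((n:ℝ) * ε)} := measure_union_le _ _
    _ ≤ ENNReal.ofReal (exp (-2 * n * ε ^ 2)) + ENNReal.ofReal (exp (-2 * n * ε ^ 2)) := by
        gcongr
        · exact (ENNReal.le_ofReal_iff_toReal_le (measure_ne_top μ _) (exp_nonneg _)).2 hup
        · exact (ENNReal.le_ofReal_iff_toReal_le (measure_ne_top μ _) (exp_nonneg _)).2 hlo
    _ = ENNReal.ofReal (2 * exp (-2 * n * ε ^ 2)) := by
        rw [← ENNReal.ofReal_add (exp_nonneg _) (exp_nonneg _), two_mul]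

lemma rpow_step {s : ℝ} (hs : 1 < s) {n : ℕ} (hn : 1 ≤ n) :
    (s - 1) * ((n : ℝ) + 1) ^ (-s) ≤ (n : ℝ) ^ (1 - s) - ((n : ℝ) + 1) ^ (1 - s) := by
  set a : ℝ := (n : ℝ) with ha
  have ha1 : (1:ℝ) ≤ a := by rw [ha]; exact_mod_cast hn
  have ha0 : (0:ℝ) < a := by linarith
  set b : ℝ := a + 1 with hb
  have hb0 : (0:ℝ) < b := by simp only [hb]; linarith
  have hab : (0:ℝ) < b / a := by positivity
  have hlog : 1 / b ≤ Real.log (b / a) := by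
    have h1 : Real.log (a / b) ≤ a / b - 1 := Real.log_le_sub_one_of_pos (by positivity)
    have h2 : Real.log (a / b) = -Real.log (b / a) := by
      rw [← Real.log_inv]
      congr 1
      field_simp
    rw [h2] at h1
    have hab1 : a / b - 1 = -(1 / b) := by
      rw [hb]; field_simp
      ring
    linarith [hab1 ▸ h1]
  have hexp : 1 + (s - 1) * (1 / b) ≤ (b / a) ^ (s - 1) := by
    rw [Real.rpow_def_of_pos hab]
    calc 1 + (s - 1) * (1 / b) ≤ 1 + (s - 1) * Real.log (b / a) := by
          have := mul_le_mul_of_nonneg_left hlog (by linarith : (0:ℝ) ≤ s - 1)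
          linarith
      _ = Real.log (b / a) * (s - 1) + 1 := by ring
      _ ≤ Real.exp (Real.log (b / a) * (s - 1)) := Real.add_one_le_exp _
  have hkey : b ^ (1 - s) * (b / a) ^ (s - 1) = a ^ (1 - s) := by
    rw [Real.div_rpow hb0.le ha0.le, mul_div_assoc', ← Real.rpow_add hb0,
      show (1 - s) + (s - 1) = 0 by ring, Real.rpow_zero, one_div, ← Real.rpow_neg ha0.le,
      show -(s - 1) = 1 - s by ring]
  have hb1s : b ^ (1 - s) * (1 / b) = b ^ (-s) := by
    rw [one_div, ← Real.rpow_neg_one b, ← Real.rpow_add hb0]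
    congr 1
    ring
  calc (s - 1) * b ^ (-s) = b ^ (1 - s) * ((1 + (s - 1) * (1 / b)) - 1) := by
        rw [show (1 + (s - 1) * (1 / b)) - 1 = (s-1) * (1/b) by ring,
          mul_comm (b ^ (1-s)) ((s-1) * (1/b)), mul_assoc, mul_comm (1/b) (b ^ (1-s)), hb1s]
    _ ≤ b ^ (1 - s) * ((b / a) ^ (s - 1) - 1) := by
        refine mul_le_mul_of_nonneg_left (by linarith) (Real.rpow_nonneg hb0.le _)
    _ = a ^ (1 - s) - b ^ (1 - s) := by rw [mul_sub, hkey, mul_one]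

lemma sum_rpow_tail_le {s : ℝ} (hs : 1 < s) {T : ℕ} (hT : 1 ≤ T) (N : ℕ) :
    ∑ n ∈ Finset.Ico (T + 1) N, (n : ℝ) ^ (-s) ≤ (T : ℝ) ^ (1 - s) / (s - 1) := by
  rw [Finset.sum_Ico_eq_sum_range]
  set g : ℕ → ℝ := fun i => ((T + i : ℕ) : ℝ) ^ (1 - s) with hg
  have hterm : ∀ i : ℕ, ((T + 1 + i : ℕ) : ℝ) ^ (-s) ≤ (g i - g (i + 1)) / (s - 1) := by
    intro i
    rw [le_div_iff₀ (by linarith : (0:ℝ) < s - 1)]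
    have h := rpow_step hs (n := T + i) (Nat.le_add_right 1 i |>.trans (by omega))
    have hc1 : ((T + 1 + i : ℕ) : ℝ) = ((T + i : ℕ) : ℝ) + 1 := by push_cast; ring
    have hc2 : ((T + i + 1 : ℕ) : ℝ) = ((T + i : ℕ) : ℝ) + 1 := by push_cast; ring
    have hc3 : ((T + (i + 1) : ℕ) : ℝ) = ((T + i : ℕ) : ℝ) + 1 := by push_cast; ring
    rw [hc1, hg]
    simp only [hc3]
    linarith [h]
  calc ∑ i ∈ Finset.range (N - (T + 1)), ((T + 1 + i : ℕ) : ℝ) ^ (-s)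
      ≤ ∑ i ∈ Finset.range (N - (T + 1)), (g i - g (i + 1)) / (s - 1) :=
        Finset.sum_le_sum fun i _ => hterm i
    _ = (g 0 - g (N - (T + 1))) / (s - 1) := by
        rw [← Finset.sum_div, Finset.sum_range_sub' g]
    _ ≤ g 0 / (s - 1) := by
        have hgn : 0 ≤ g (N - (T + 1)) := Real.rpow_nonneg (by positivity) _
        have h01 : (0:ℝ) < s - 1 := by linarith
        have : g 0 - g (N - (T + 1)) ≤ g 0 := by linarith
        gcongr
    _ = (T : ℝ) ^ (1 - s) / (s - 1) := by simp [hg]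

lemma partial_sum_bound {α : ℝ} (hα : 1 / 2 < α) {T : ℕ} (hT : 1 ≤ T) (N : ℕ) :
    ∑ n ∈ Finset.range N, 2 * ((max n T : ℕ) : ℝ) ^ (-(2 * α)) ≤
      ((T : ℝ) + 1) * (2 * (T : ℝ) ^ (-(2 * α))) + 2 / (2 * α - 1) * (T : ℝ) ^ (1 - 2 * α) := by
  have hs1 : (1:ℝ) < 2 * α := by linarith
  have hcn : ∀ n : ℕ, 0 ≤ 2 * ((max n T : ℕ) : ℝ) ^ (-(2 * α)) := fun n => by positivity
  calc ∑ n ∈ Finset.range N, 2 * ((max n T : ℕ) : ℝ) ^ (-(2 * α))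
      ≤ ∑ n ∈ Finset.range (T + 1 + N), 2 * ((max n T : ℕ) : ℝ) ^ (-(2 * α)) :=
        Finset.sum_le_sum_of_subset_of_nonneg (Finset.range_subset_range.2 (by omega))
          (fun i _ _ => hcn i)
    _ = (∑ n ∈ Finset.Ico 0 (T + 1), 2 * ((max n T : ℕ) : ℝ) ^ (-(2 * α)))
        + ∑ n ∈ Finset.Ico (T + 1) (T + 1 + N), 2 * ((max n T : ℕ) : ℝ) ^ (-(2 * α)) := by
        rw [Finset.range_eq_Ico,
          ← Finset.sum_Ico_consecutive _ (Nat.zero_le (T + 1)) (Nat.le_add_right _ _)]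
    _ ≤ ((T : ℝ) + 1) * (2 * (T : ℝ) ^ (-(2 * α))) + 2 / (2 * α - 1) * (T : ℝ) ^ (1 - 2 * α) := by
        refine add_le_add ?_ ?_
        · have heq : ∀ n ∈ Finset.Ico 0 (T + 1),
              2 * ((max n T : ℕ) : ℝ) ^ (-(2 * α)) = 2 * (T : ℝ) ^ (-(2 * α)) := by
            intro n hn
            rw [Finset.mem_Ico] at hn
            rw [max_eq_right (by omega : n ≤ T)]
          rw [Finset.sum_congr rfl heq, Finset.sum_const, Nat.card_Ico, nsmul_eq_mul]
          push_cast
          ring_nf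
          exact le_refl _
        · have heq : ∀ n ∈ Finset.Ico (T + 1) (T + 1 + N),
              2 * ((max n T : ℕ) : ℝ) ^ (-(2 * α)) = 2 * (n : ℝ) ^ (-(2 * α)) := by
            intro n hn
            rw [Finset.mem_Ico] at hn
            rw [max_eq_left (by omega : T ≤ n)]
          rw [Finset.sum_congr rfl heq, ← Finset.mul_sum]
          have h := sum_rpow_tail_le hs1 hT (T + 1 + N)
          calc 2 * ∑ n ∈ Finset.Ico (T + 1) (T + 1 + N), (n : ℝ) ^ (-(2 * α))
              ≤ 2 * ((T : ℝ) ^ (1 - 2 * α) / (2 * α - 1)) := by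
                refine mul_le_mul_of_nonneg_left h (by norm_num)
            _ = 2 / (2 * α - 1) * (T : ℝ) ^ (1 - 2 * α) := by ring

lemma tsum_c_le {α : ℝ} (hα : 1 / 2 < α) {T : ℕ} (hT : 1 ≤ T) :
    ∑' n : ℕ, ENNReal.ofReal (2 * ((max n T : ℕ) : ℝ) ^ (-(2 * α))) ≤
      ENNReal.ofReal (((T : ℝ) + 1) * (2 * (T : ℝ) ^ (-(2 * α)))
        + 2 / (2 * α - 1) * (T : ℝ) ^ (1 - 2 * α)) := by
  rw [ENNReal.tsum_eq_iSup_sum]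
  refine iSup_le fun t => ?_
  obtain ⟨N, htN⟩ := t.exists_nat_subset_range
  calc ∑ n ∈ t, ENNReal.ofReal (2 * ((max n T : ℕ) : ℝ) ^ (-(2 * α)))
      ≤ ∑ n ∈ Finset.range N, ENNReal.ofReal (2 * ((max n T : ℕ) : ℝ) ^ (-(2 * α))) :=
        Finset.sum_le_sum_of_subset htN
    _ = ENNReal.ofReal (∑ n ∈ Finset.range N, 2 * ((max n T : ℕ) : ℝ) ^ (-(2 * α))) :=
        (ENNReal.ofReal_sum_of_nonneg (fun n _ => by positivity)).symm
    _ ≤ _ := ENNReal.ofReal_le_ofReal (partial_sum_bound hα hT N)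

end AuxLemmas

/-- probabilistic content of Lemma 1: Fix an integer `K ≥ 2`, a real `α > 1/2`
and an integer `T ≥ 1`.  For each pair `i < j` of indices in `Fin K`, `X i j k` is the
`(k+1)`-st sample of an i.i.d. sequence of `[0,1]`-valued random variables with common mean
`p i j` (the sequences for different pairs live on the common probability space but need not
be independent of one another).  Then the probability that there exist a pair `i < j` and an
integer `n ≥ 1` such that either (`n ≤ T` and `|μ^{ij}_n − p_{ij}| > √(α·ln T / n)`) or
(`n > T` and `|μ^{ij}_n − p_{ij}| > √(α·ln n / n)`), where `μ^{ij}_n` is the empirical mean of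
the first `n` samples of pair `(i,j)`, is at most `(4α−1)·K² / ((2α−1)·T^{2α−1})`. -/
theorem stmt_0 {Ω : Type*} [MeasurableSpace Ω] (μ : Measure Ω) [IsProbabilityMeasure μ]
    (K : ℕ) (hK : 2 ≤ K)
    (X : Fin K → Fin K → ℕ → Ω → ℝ) (p : Fin K → Fin K → ℝ)
    (hp : ∀ i j : Fin K, i < j → p i j ∈ Set.Icc (0 : ℝ) 1)
    (hmeas : ∀ (i j : Fin K) (n : ℕ), i < j → Measurable (X i j n))
    (hrange : ∀ (i j : Fin K) (n : ℕ) (ω : Ω), i < j → X i j n ω ∈ Set.Icc (0 : ℝ) 1)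
    (hindep : ∀ i j : Fin K, i < j → iIndepFun (X i j) μ)
    (hident : ∀ (i j : Fin K) (n : ℕ), i < j → IdentDistrib (X i j n) (X i j 0) μ μ)
    (hmean : ∀ i j : Fin K, i < j → ∫ ω, X i j 0 ω ∂μ = p i j)
    (α : ℝ) (hα : 1 / 2 < α) (T : ℕ) (hT : 1 ≤ T) :
    μ {ω | ∃ i j : Fin K, i < j ∧ ∃ n : ℕ, 1 ≤ n ∧
        ((n ≤ T ∧
            |(∑ k ∈ Finset.range n, X i j k ω) / n - p i j| > Real.sqrt (α * Real.log T / n)) ∨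
         (T < n ∧
            |(∑ k ∈ Finset.range n, X i j k ω) / n - p i j| > Real.sqrt (α * Real.log n / n)))}
      ≤ ENNReal.ofReal ((4 * α - 1) * (K : ℝ) ^ 2 / ((2 * α - 1) * (T : ℝ) ^ (2 * α - 1))) := by
  have hT0 : (0:ℝ) < T := by exact_mod_cast hT
  have hα0 : (0:ℝ) < α := by linarith
  set A : Fin K → Fin K → ℕ → Set Ω := fun i j n =>
    {ω | i < j ∧ 1 ≤ n ∧
      ((n ≤ T ∧
          |(∑ k ∈ Finset.range n, X i j k ω) / n - p i j| > Real.sqrt (α * Real.log T / n)) ∨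
       (T < n ∧
          |(∑ k ∈ Finset.range n, X i j k ω) / n - p i j| > Real.sqrt (α * Real.log n / n)))}
    with hA
  have hset : {ω | ∃ i j : Fin K, i < j ∧ ∃ n : ℕ, 1 ≤ n ∧
        ((n ≤ T ∧
            |(∑ k ∈ Finset.range n, X i j k ω) / n - p i j| > Real.sqrt (α * Real.log T / n)) ∨
         (T < n ∧
            |(∑ k ∈ Finset.range n, X i j k ω) / n - p i j| > Real.sqrt (α * Real.log n / n)))}
      = ⋃ i, ⋃ j, ⋃ n, A i j n := by
    ext ω
    simp only [hA, Set.mem_iUnion, Set.mem_setOf_eq]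
    constructor
    · rintro ⟨i, j, hij, n, hn, h⟩; exact ⟨i, j, n, hij, hn, h⟩
    · rintro ⟨i, j, n, hij, hn, h⟩; exact ⟨i, j, hij, n, hn, h⟩
  -- per (i,j,n) bound
  have hAbound : ∀ (i j : Fin K) (n : ℕ),
      μ (A i j n) ≤ ENNReal.ofReal (2 * ((max n T : ℕ) : ℝ) ^ (-(2 * α))) := by
    intro i j n
    by_cases hij : i < j
    · rcases Nat.eq_zero_or_pos n with hn0 | hn1
      · have : A i j n = ∅ := by
          ext ω; simp [hA, hn0]
        simp [this]
      · -- n ≥ 1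
        set m : ℕ := max n T with hm
        have hm1 : 1 ≤ m := le_trans hT (le_max_right n T)
        have hmR : (1:ℝ) ≤ (m:ℝ) := by exact_mod_cast hm1
        have hnR : (0:ℝ) < n := by exact_mod_cast hn1
        set ε : ℝ := Real.sqrt (α * Real.log m / n) with hε
        have hsub : A i j n ⊆
            {ω | |(∑ k ∈ Finset.range n, X i j k ω) / n - p i j| > ε} := by
          intro ω hω
          obtain ⟨-, -, h⟩ := hω
          rcases h with ⟨hnT, habs⟩ | ⟨hTn, habs⟩
          · have : ((m:ℕ) : ℝ) = (T : ℝ) := by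
              rw [hm, max_eq_right hnT]
            rwa [Set.mem_setOf_eq, hε, this]
          · have : ((m:ℕ) : ℝ) = (n : ℝ) := by
              rw [hm, max_eq_left hTn.le]
            rwa [Set.mem_setOf_eq, hε, this]
        have hlogm : 0 ≤ Real.log m := Real.log_nonneg hmR
        rcases hlogm.eq_or_lt with hlm | hlm
        · -- log m = 0, so m = 1 and the bound is 2
          have hm1' : (m:ℝ) = 1 := by
            rw [← Real.exp_log (by linarith : (0:ℝ) < (m:ℝ)), ← hlm, Real.exp_zero]
          calc μ (A i j n) ≤ 1 := prob_le_one
            _ ≤ ENNReal.ofReal (2 * ((m:ℕ) : ℝ) ^ (-(2 * α))) := by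
                rw [hm1', Real.one_rpow, mul_one]
                exact le_trans (by norm_num) (le_of_eq (ENNReal.ofReal_ofNat 2).symm)
        · -- positive case: apply tail_bound
          have hεpos : 0 < ε := Real.sqrt_pos.2 (by positivity)
          have hmean' : ∀ k, ∫ ω, X i j k ω ∂μ = p i j := fun k =>
            ((hident i j k hij).integral_eq).trans (hmean i j hij)
          have htail := tail_bound (fun k => hmeas i j k hij) (fun k ω => hrange i j k ω hij)
            (hindep i j hij) (hp i j hij).1 (hp i j hij).2 hmean' hn1 hεpos
          refine (measure_mono hsub).trans (htail.trans (le_of_eq ?_))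
          congr 1
          have hε2 : ε ^ 2 = α * Real.log m / n := Real.sq_sqrt (by positivity)
          rw [hε2, Real.rpow_def_of_pos (by linarith : (0:ℝ) < (m:ℝ))]
          congr 1
          field_simp
    · have : A i j n = ∅ := by
        ext ω; simp [hA, hij]
      simp [this]
  -- per-pair bound
  set Sreal : ℝ := ((T : ℝ) + 1) * (2 * (T : ℝ) ^ (-(2 * α)))
      + 2 / (2 * α - 1) * (T : ℝ) ^ (1 - 2 * α) with hSreal
  set C : ENNReal := ENNReal.ofReal Sreal with hC
  have hpair : ∀ i j : Fin K, μ (⋃ n, A i j n) ≤ C := by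
    intro i j
    calc μ (⋃ n, A i j n) ≤ ∑' n, μ (A i j n) := measure_iUnion_le _
      _ ≤ ∑' n : ℕ, ENNReal.ofReal (2 * ((max n T : ℕ) : ℝ) ^ (-(2 * α))) :=
          ENNReal.tsum_le_tsum (fun n => hAbound i j n)
      _ ≤ C := tsum_c_le hα hT
  -- union bound over pairs
  have hmain : μ (⋃ i, ⋃ j, ⋃ n, A i j n) ≤ ∑ i : Fin K, ∑ j : Fin K, μ (⋃ n, A i j n) := by
    calc μ (⋃ i, ⋃ j, ⋃ n, A i j n) ≤ ∑' i : Fin K, μ (⋃ j, ⋃ n, A i j n) :=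
          measure_iUnion_le _
      _ = ∑ i : Fin K, μ (⋃ j, ⋃ n, A i j n) := tsum_fintype _
      _ ≤ ∑ i : Fin K, ∑ j : Fin K, μ (⋃ n, A i j n) := by
          refine Finset.sum_le_sum fun i _ => ?_
          calc μ (⋃ j, ⋃ n, A i j n) ≤ ∑' j : Fin K, μ (⋃ n, A i j n) := measure_iUnion_le _
            _ = ∑ j : Fin K, μ (⋃ n, A i j n) := tsum_fintype _
  -- combine
  set f : Fin K → Fin K → ENNReal := fun i j => if i < j then C else 0 with hf
  have hf' : ∀ i j, μ (⋃ n, A i j n) ≤ f i j := by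
    intro i j
    by_cases hij : i < j
    · simpa [hf, hij] using hpair i j
    · have hempty : (⋃ n, A i j n) = ∅ := by
        simp only [Set.iUnion_eq_empty]
        intro n
        ext ω
        simp [hA, hij]
      simp [hf, hij, hempty]
  have hstep1 : μ {ω | ∃ i j : Fin K, i < j ∧ ∃ n : ℕ, 1 ≤ n ∧
        ((n ≤ T ∧
            |(∑ k ∈ Finset.range n, X i j k ω) / n - p i j| > Real.sqrt (α * Real.log T / n)) ∨
         (T < n ∧
            |(∑ k ∈ Finset.range n, X i j k ω) / n - p i j| > Real.sqrt (α * Real.log n / n)))}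
      ≤ ∑ i : Fin K, ∑ j : Fin K, f i j := by
    rw [hset]
    exact hmain.trans (Finset.sum_le_sum fun i _ => Finset.sum_le_sum fun j _ => hf' i j)
  have hdouble : (∑ i : Fin K, ∑ j : Fin K, f i j) + (∑ i : Fin K, ∑ j : Fin K, f i j)
      ≤ (K * K) • C := by
    have hswap : (∑ i : Fin K, ∑ j : Fin K, f i j) = ∑ i : Fin K, ∑ j : Fin K, f j i :=
      Finset.sum_comm
    calc (∑ i : Fin K, ∑ j : Fin K, f i j) + (∑ i : Fin K, ∑ j : Fin K, f i j)
        = ∑ i : Fin K, ∑ j : Fin K, (f i j + f j i) := by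
          nth_rewrite 2 [hswap]
          rw [← Finset.sum_add_distrib]
          refine Finset.sum_congr rfl fun i _ => ?_
          rw [← Finset.sum_add_distrib]
      _ ≤ ∑ _i : Fin K, ∑ _j : Fin K, C := by
          refine Finset.sum_le_sum fun i _ => Finset.sum_le_sum fun j _ => ?_
          rcases lt_trichotomy i j with h | h | h
          · simp [hf, h, lt_asymm h]
          · simp [hf, h, lt_irrefl]
          · simp [hf, h, lt_asymm h]
      _ = (K * K) • C := by
          simp only [Finset.sum_const, Finset.card_univ, Fintype.card_fin, smul_smul,
            nsmul_eq_mul]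
          push_cast
          rw [mul_assoc]
  have hreal : ((K * K : ℕ) : ℝ) * Sreal
      ≤ 2 * ((4 * α - 1) * (K : ℝ) ^ 2 / ((2 * α - 1) * (T : ℝ) ^ (2 * α - 1))) := by
    have h2a : (0:ℝ) < 2 * α - 1 := by linarith
    set u : ℝ := (T : ℝ) ^ (1 - 2 * α) with hu
    set v : ℝ := (T : ℝ) ^ (-(2 * α)) with hv
    have hu0 : 0 ≤ u := Real.rpow_nonneg hT0.le _
    have hv0 : 0 ≤ v := Real.rpow_nonneg hT0.le _
    have hTv : u = (T : ℝ) * v := by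
      rw [hu, hv, show (1 : ℝ) - 2 * α = 1 + -(2 * α) by ring, Real.rpow_add hT0,
        Real.rpow_one]
    have hvu : v ≤ u := Real.rpow_le_rpow_of_exponent_le (by exact_mod_cast hT) (by linarith)
    have hTpu : (T : ℝ) ^ (2 * α - 1) * u = 1 := by
      rw [hu, ← Real.rpow_add hT0, show 2 * α - 1 + (1 - 2 * α) = 0 by ring, Real.rpow_zero]
    have hTp0 : (0:ℝ) < (T : ℝ) ^ (2 * α - 1) := Real.rpow_pos_of_pos hT0 _
    rw [show 2 * ((4 * α - 1) * (K : ℝ) ^ 2 / ((2 * α - 1) * (T : ℝ) ^ (2 * α - 1)))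
        = (2 * (4 * α - 1) * (K : ℝ) ^ 2) / ((2 * α - 1) * (T : ℝ) ^ (2 * α - 1)) by ring,
      le_div_iff₀ (by positivity)]
    have hS : Sreal ≤ (4 + 2 / (2 * α - 1)) * u := by
      rw [hSreal]
      have he : ((T : ℝ) + 1) * (2 * v) = 2 * ((T : ℝ) * v) + 2 * v := by ring
      rw [he, ← hTv]
      nlinarith [hvu, hu0]
    calc ((K * K : ℕ) : ℝ) * Sreal * ((2 * α - 1) * (T : ℝ) ^ (2 * α - 1))
        ≤ ((K * K : ℕ) : ℝ) * ((4 + 2 / (2 * α - 1)) * u)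
            * ((2 * α - 1) * (T : ℝ) ^ (2 * α - 1)) := by
          refine mul_le_mul_of_nonneg_right
            (mul_le_mul_of_nonneg_left hS (Nat.cast_nonneg _)) (by positivity)
      _ = ((K * K : ℕ) : ℝ) * ((4 + 2 / (2 * α - 1)) * (2 * α - 1))
            * ((T : ℝ) ^ (2 * α - 1) * u) := by ring
      _ = ((K * K : ℕ) : ℝ) * (8 * α - 2) := by
          rw [hTpu, mul_one]
          congr 1
          field_simp
          ring
      _ ≤ 2 * (4 * α - 1) * (K : ℝ) ^ 2 := by
          push_cast
          nlinarith [sq_nonneg (K : ℝ)]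
  have hKC : (K * K) • C ≤ 2 * ENNReal.ofReal
      ((4 * α - 1) * (K : ℝ) ^ 2 / ((2 * α - 1) * (T : ℝ) ^ (2 * α - 1))) := by
    have hSnn : 0 ≤ Sreal := by
      rw [hSreal]
      have h2a : (0:ℝ) < 2 * α - 1 := by linarith
      positivity
    calc (K * K) • C = ((K * K : ℕ) : ENNReal) * C := by rw [nsmul_eq_mul]
      _ = ENNReal.ofReal ((K * K : ℕ) : ℝ) * ENNReal.ofReal Sreal := by
          rw [ENNReal.ofReal_natCast, hC]
      _ = ENNReal.ofReal (((K * K : ℕ) : ℝ) * Sreal) :=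
          (ENNReal.ofReal_mul (Nat.cast_nonneg _)).symm
      _ ≤ ENNReal.ofReal (2 * ((4 * α - 1) * (K : ℝ) ^ 2
            / ((2 * α - 1) * (T : ℝ) ^ (2 * α - 1)))) := ENNReal.ofReal_le_ofReal hreal
      _ = 2 * ENNReal.ofReal
            ((4 * α - 1) * (K : ℝ) ^ 2 / ((2 * α - 1) * (T : ℝ) ^ (2 * α - 1))) := by
          rw [ENNReal.ofReal_mul (by norm_num : (0:ℝ) ≤ 2), ENNReal.ofReal_ofNat]
  refine (ENNReal.mul_le_mul_iff_right (by norm_num : (2:ENNReal) ≠ 0) ENNReal.ofNat_ne_top).1 ?_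
  calc 2 * μ _ = μ _ + μ _ := two_mul _
    _ ≤ (∑ i : Fin K, ∑ j : Fin K, f i j) + (∑ i : Fin K, ∑ j : Fin K, f i j) :=
        add_le_add hstep1 hstep1
    _ ≤ (K * K) • C := hdouble
    _ ≤ 2 * ENNReal.ofReal
          ((4 * α - 1) * (K : ℝ) ^ 2 / ((2 * α - 1) * (T : ℝ) ^ (2 * α - 1))) := hKC
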